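/- Let $p$ be an odd prime and $M$ a finite abelian $p$-group equipped with a non-degenerate, skew-symmetric, biadditive pairing $[\cdot,\cdot]: M \times M \to \mathbb{Q}_p/\mathbb{Z}_p$ (or $\mathbb{Q}/\mathbb{Z}$). Then $M \cong M' \times M'$ for some abelian group $M'$; in particular the order of $M$ is a perfect square and $\dim_{\mathbb{F}_p} M[p]$ is even. -/

import Mathlib

set_option maxHeartbeats 1000000

private lemma tor_lemma {q : ℕ} (hq : 0 < q) {c z : AddCircle (1:ℚ)}
    (hc : addOrderOf c = q) (hz : q • z = 0) : ∃ j : ℤ, j • c = z := by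
  obtain ⟨m, hmlt, hg, hcm⟩ := (AddCircle.addOrderOf_eq_pos_iff hq).mp hc
  have hzfin : IsOfFinAddOrder z := isOfFinAddOrder_iff_nsmul_eq_zero.mpr ⟨q, hq, hz⟩
  set r := addOrderOf z with hrdef
  have hr : 0 < r := hzfin.addOrderOf_pos
  have hrq : r ∣ q := addOrderOf_dvd_of_nsmul_eq_zero hz
  obtain ⟨m', hm'lt, hg', hzm⟩ := (AddCircle.addOrderOf_eq_pos_iff hr).mp hrdef.symm
  obtain ⟨u, v, huv⟩ := Nat.isCoprime_iff_coprime.mpr hg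
  set s := q / r with hsdef
  have hqs : r * s = q := Nat.mul_div_cancel' hrq
  refine ⟨u * (m' * s), ?_⟩
  rw [← hcm, ← hzm, ← AddCircle.coe_zsmul, ← sub_eq_zero, ← QuotientAddGroup.mk_sub,
    AddCircle.coe_eq_zero_iff]
  refine ⟨-(v * (m' * s)), ?_⟩
  have hq0 : (q:ℚ) ≠ 0 := Nat.cast_ne_zero.mpr hq.ne'
  have hr0 : (r:ℚ) ≠ 0 := Nat.cast_ne_zero.mpr hr.ne'
  have h1 : (u:ℚ) * m + v * q = 1 := by exact_mod_cast huv
  have h2 : (r:ℚ) * s = q := by exact_mod_cast hqs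
  push_cast [zsmul_eq_mul]
  field_simp
  linear_combination (-(↑m' * ↑s * ↑r) : ℚ) * h1 + (-↑m' : ℚ) * h2

private theorem main_ind (p : ℕ) [Fact p.Prime] (hodd : Odd p) :
    ∀ N : ℕ, ∀ (M : Type) [AddCommGroup M] [Finite M], Nat.card M ≤ N →
      (∀ m : M, ∃ k : ℕ, p ^ k • m = 0) →
      ∀ pair : M →+ M →+ AddCircle (1 : ℚ),
        (∀ x : M, (∀ y : M, pair x y = 0) → x = 0) →
        (∀ x y : M, pair y x = - pair x y) →
        ∃ (M' : Type) (_ : AddCommGroup M'), Nonempty (M ≃+ M' × M') := by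
  intro N
  induction N using Nat.strong_induction_on with
  | _ N IH =>
  intro M _ _ hcard hpgp pair hnd hskew
  have hp : p.Prime := Fact.out
  have hp1 : 1 < p := hp.one_lt
  by_cases hS : ∀ x : M, x = 0
  · haveI : Subsingleton M := ⟨fun a b => (hS a).trans (hS b).symm⟩
    exact ⟨PUnit, inferInstance, ⟨AddEquiv.ofBijective (0 : M →+ PUnit × PUnit)
      ⟨fun _ _ _ => Subsingleton.elim _ _, fun _ => ⟨0, Subsingleton.elim _ _⟩⟩⟩⟩
  push_neg at hS
  obtain ⟨x0, hx0⟩ := hS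
  haveI : Nonempty M := ⟨0⟩
  obtain ⟨a, ha⟩ := Finite.exists_max (fun m : M => addOrderOf m)
  obtain ⟨k, hk⟩ := hpgp a
  obtain ⟨n, hnk, hn⟩ := (Nat.dvd_prime_pow hp).mp (addOrderOf_dvd_of_nsmul_eq_zero hk)
  set q := p ^ n with hqdef
  have hq : 0 < q := pow_pos hp.pos n
  have hmaxdvd : ∀ y : M, addOrderOf y ∣ q := by
    intro y
    obtain ⟨k', hk'⟩ := hpgp y
    obtain ⟨m, hm, hym⟩ := (Nat.dvd_prime_pow hp).mp (addOrderOf_dvd_of_nsmul_eq_zero hk')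
    rw [hym]
    apply pow_dvd_pow
    have h1 := ha y
    rw [hym, hn] at h1
    exact (Nat.pow_le_pow_iff_right hp1).mp h1
  have hq_all : ∀ y : M, q • y = 0 := fun y => addOrderOf_dvd_iff_nsmul_eq_zero.mp (hmaxdvd y)
  have hn1 : 1 ≤ n := by
    by_contra h
    have hn0 : n = 0 := by omega
    have := hq_all x0
    rw [hqdef, hn0, pow_zero, one_smul] at this
    exact hx0 this
  have hq_pair : ∀ x y : M, q • pair x y = 0 := by
    intro x y
    have h1 : pair (q • x) y = q • pair x y := by rw [map_nsmul]; rfl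
    rw [hq_all x] at h1
    simpa using h1.symm
  have hdiag : ∀ x : M, pair x x = 0 := by
    intro x
    have h2 : (2:ℕ) • pair x x = 0 := by
      rw [two_nsmul]
      exact eq_neg_iff_add_eq_zero.mp (hskew x x)
    have hd2 : addOrderOf (pair x x) ∣ 2 := addOrderOf_dvd_of_nsmul_eq_zero h2
    have hdq : addOrderOf (pair x x) ∣ q := addOrderOf_dvd_of_nsmul_eq_zero (hq_pair x x)
    have hp2 : ¬ (2 ∣ p) := by obtain ⟨t, ht⟩ := hodd; omega
    have hcop : Nat.Coprime 2 q :=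
      (Nat.Prime.coprime_iff_not_dvd Nat.prime_two).mpr
        (fun h => hp2 (Nat.Prime.dvd_of_dvd_pow Nat.prime_two h))
    have := Nat.dvd_gcd hd2 hdq
    rw [Nat.Coprime.gcd_eq_one hcop] at this
    exact AddMonoid.addOrderOf_eq_one_iff.mp (Nat.dvd_one.mp this)
  -- find b
  have hbex : ∃ b : M, ¬ p ^ (n-1) • pair a b = 0 := by
    by_contra h
    push_neg at h
    have hz : ∀ y, pair (p^(n-1) • a) y = 0 := by
      intro y
      rw [map_nsmul]
      exact h y
    have h0 := hnd _ hz
    have hd : q ∣ p ^ (n-1) := hn ▸ addOrderOf_dvd_of_nsmul_eq_zero h0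
    have h1 := Nat.le_of_dvd (pow_pos hp.pos _) hd
    rw [hqdef] at h1
    have h2 : p^(n-1) < p^n := Nat.pow_lt_pow_right hp1 (by omega)
    omega
  obtain ⟨b, hbne⟩ := hbex
  set c := pair a b with hcdef
  have hc : addOrderOf c = q := by
    obtain ⟨m, hm, hcm⟩ := (Nat.dvd_prime_pow hp).mp
      (addOrderOf_dvd_of_nsmul_eq_zero (hq_pair a b))
    rw [hcm]
    congr 1
    by_contra hne
    have hmn : m ≤ n - 1 := by omega
    exact hbne (addOrderOf_dvd_iff_nsmul_eq_zero.mp (hcm ▸ pow_dvd_pow p hmn))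
  have hba : pair b a = -c := hskew a b
  set K : AddSubgroup M := (pair a).ker ⊓ (pair b).ker with hKdef
  have memK : ∀ {m : M}, m ∈ K ↔ pair a m = 0 ∧ pair b m = 0 := by
    intro m
    simp [hKdef, AddSubgroup.mem_inf, AddMonoidHom.mem_ker]
  have decomp : ∀ m : M, ∃ (i j : ℤ) (k : M), k ∈ K ∧ m = i • a + j • b + k := by
    intro m
    obtain ⟨j, hj⟩ := tor_lemma hq hc (hq_pair a m)
    obtain ⟨i', hi'⟩ := tor_lemma hq hc (hq_pair b m)
    refine ⟨-i', j, m - ((-i') • a + j • b), ?_, by abel⟩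
    rw [memK]
    constructor
    · simp [map_sub, map_add, map_zsmul, hdiag, hj]
      rw [← hcdef, hj, sub_self]
    · simp [map_sub, map_add, map_zsmul, hdiag, hba, hi', smul_neg]
  -- the maps from ZMod q
  haveI : NeZero q := ⟨hq.ne'⟩
  have hqa' : (zmultiplesHom M a) (q : ℤ) = 0 := by
    simp [zmultiplesHom_apply, natCast_zsmul, hq_all a]
  have hqb' : (zmultiplesHom M b) (q : ℤ) = 0 := by
    simp [zmultiplesHom_apply, natCast_zsmul, hq_all b]
  set φa : ZMod q →+ M := ZMod.lift q ⟨zmultiplesHom M a, hqa'⟩ with hφa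
  set φb : ZMod q →+ M := ZMod.lift q ⟨zmultiplesHom M b, hqb'⟩ with hφb
  have φa_coe : ∀ i : ℤ, φa (i : ZMod q) = i • a := fun i => ZMod.lift_coe q _ i
  have φb_coe : ∀ i : ℤ, φb (i : ZMod q) = i • b := fun i => ZMod.lift_coe q _ i
  set Φ : (ZMod q × ZMod q) × K →+ M := (φa.coprod φb).coprod K.subtype with hΦdef
  have hΦ : ∀ (i j : ℤ) (k : K), Φ ((↑i, ↑j), k) = i • a + j • b + (k : M) := by
    intro i j k
    simp [hΦdef, AddMonoidHom.coprod_apply, φa_coe, φb_coe]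
  have hsmul_ord : ∀ (x : M) (i : ℤ), (q : ℤ) ∣ i → i • x = 0 := by
    intro x i hi
    rw [← addOrderOf_dvd_iff_zsmul_eq_zero]
    exact dvd_trans (Int.natCast_dvd_natCast.mpr (hmaxdvd x)) hi
  have hinj : Function.Injective Φ := by
    rw [injective_iff_map_eq_zero]
    rintro ⟨⟨x1, x2⟩, k⟩ hx
    obtain ⟨i, rfl⟩ := ZMod.intCast_surjective x1
    obtain ⟨j, rfl⟩ := ZMod.intCast_surjective x2
    rw [hΦ] at hx
    have hk := memK.mp k.prop
    have hdvd_i : (q : ℤ) ∣ i := by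
      have h1 : pair b (i • a + j • b + (k : M)) = 0 := by rw [hx, map_zero]
      rw [map_add, map_add, map_zsmul, map_zsmul, hba, hdiag, smul_zero, hk.2,
        add_zero, add_zero, smul_neg] at h1
      have h2 : i • c = 0 := neg_eq_zero.mp h1
      rw [← addOrderOf_dvd_iff_zsmul_eq_zero, hc] at h2
      exact h2
    have hdvd_j : (q : ℤ) ∣ j := by
      have h1 : pair a (i • a + j • b + (k : M)) = 0 := by rw [hx, map_zero]
      rw [map_add, map_add, map_zsmul, map_zsmul, hdiag, smul_zero, hk.1,
        add_zero, zero_add] at h1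
      rw [← addOrderOf_dvd_iff_zsmul_eq_zero, hc] at h1
      exact h1
    have hk0 : (k : M) = 0 := by
      rw [hsmul_ord a i hdvd_i, hsmul_ord b j hdvd_j, zero_add, zero_add] at hx
      exact hx
    have : k = 0 := Subtype.ext hk0
    rw [this, (ZMod.intCast_zmod_eq_zero_iff_dvd i q).mpr hdvd_i,
      (ZMod.intCast_zmod_eq_zero_iff_dvd j q).mpr hdvd_j]
    rfl
  have hsurj : Function.Surjective Φ := by
    intro m
    obtain ⟨i, j, k, hkK, hm⟩ := decomp m
    exact ⟨((↑i, ↑j), ⟨k, hkK⟩), by rw [hΦ]; exact hm.symm⟩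
  have e1 : ((ZMod q × ZMod q) × K) ≃+ M := AddEquiv.ofBijective Φ ⟨hinj, hsurj⟩
  -- cardinality drop
  have hcardM : Nat.card M = q * q * Nat.card K := by
    rw [← Nat.card_congr e1.toEquiv, Nat.card_prod, Nat.card_prod, Nat.card_zmod]
  have hKpos : 0 < Nat.card K := Nat.card_pos
  have hq2 : 2 ≤ q := le_trans hp1 (le_trans (le_refl p) (by
    calc p = p ^ 1 := (pow_one p).symm
    _ ≤ p ^ n := Nat.pow_le_pow_right hp.pos hn1))
  have hKlt : Nat.card K < Nat.card M := by
    rw [hcardM]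
    have h11 : 1 < q * q := by nlinarith
    calc Nat.card ↥K = 1 * Nat.card ↥K := (one_mul _).symm
    _ < q * q * Nat.card ↥K := mul_lt_mul_of_pos_right h11 hKpos
  -- pairing on K
  set pairK : K →+ K →+ AddCircle (1:ℚ) :=
    ((pair.comp K.subtype).flip.comp K.subtype).flip with hpairK
  have pairK_apply : ∀ x y : K, pairK x y = pair (x : M) (y : M) := fun x y => rfl
  have hpgpK : ∀ m : K, ∃ k : ℕ, p ^ k • m = 0 := by
    intro m
    obtain ⟨k, hk⟩ := hpgp (m : M)
    exact ⟨k, Subtype.ext (by simpa using hk)⟩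
  have hndK : ∀ x : K, (∀ y : K, pairK x y = 0) → x = 0 := by
    intro x hx
    refine Subtype.ext (hnd _ ?_)
    intro z
    obtain ⟨i, j, k, hkK, rfl⟩ := decomp z
    have hxa : pair (x : M) a = 0 := by
      rw [hskew, (memK.mp x.prop).1, neg_zero]
    have hxb : pair (x : M) b = 0 := by
      rw [hskew, (memK.mp x.prop).2, neg_zero]
    rw [map_add, map_add, map_zsmul, map_zsmul, hxa, hxb, smul_zero, smul_zero,
      zero_add, zero_add]
    exact hx ⟨k, hkK⟩
  have hskewK : ∀ x y : K, pairK y x = - pairK x y := fun x y => hskew (x : M) (y : M)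
  obtain ⟨N', iN', ⟨e2⟩⟩ := IH (Nat.card K) (lt_of_lt_of_le hKlt hcard) K
    (Nat.le_refl _) hpgpK pairK hndK hskewK
  refine ⟨ZMod q × N', inferInstance, ⟨?_⟩⟩
  exact (e1.symm.trans (AddEquiv.prodCongr (AddEquiv.refl _) e2)).trans
    (AddEquiv.prodProdProdComm _ _ _ _)

/-- Let `p` be an odd prime and `M` a finite abelian `p`-group with a
non-degenerate skew-symmetric biadditive pairing into `ℚ/ℤ`.  Then `M ≅ M' × M'` for
some abelian group `M'`; in particular `#M` is a perfect square, and the `𝔽_p`-dimension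
of `M[p]` is even, equivalently `#M[p]` is a perfect square. -/
theorem stmt_10 (p : ℕ) [Fact p.Prime] (hodd : Odd p)
    (M : Type) [AddCommGroup M] [Finite M]
    (hpgp : ∀ m : M, ∃ k : ℕ, p ^ k • m = 0)
    (pair : M →+ M →+ AddCircle (1 : ℚ))
    (hnd : ∀ x : M, (∀ y : M, pair x y = 0) → x = 0)
    (hskew : ∀ x y : M, pair y x = - pair x y) :
    (∃ (M' : Type) (_ : AddCommGroup M'), Nonempty (M ≃+ M' × M')) ∧
      IsSquare (Nat.card M) ∧ IsSquare (Nat.card {m : M // p • m = 0}) := by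
  obtain ⟨M', iM', ⟨e⟩⟩ := main_ind p hodd (Nat.card M) M le_rfl hpgp pair hnd hskew
  refine ⟨⟨M', iM', ⟨e⟩⟩, ⟨Nat.card M', by rw [Nat.card_congr e.toEquiv, Nat.card_prod]⟩, ?_⟩
  have ea : {m : M // p • m = 0} ≃ {x : M' × M' // p • x = 0} := by
    refine Equiv.subtypeEquiv e.toEquiv ?_
    intro m
    constructor
    · intro h
      show p • e m = 0
      rw [← map_nsmul, h, map_zero]
    · intro h
      have h2 : e (p • m) = e 0 := by rw [map_nsmul, map_zero]; exact h
      exact e.injective h2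
  have eb : {x : M' × M' // p • x = 0} ≃ {x : M' × M' // p • x.1 = 0 ∧ p • x.2 = 0} := by
    refine Equiv.subtypeEquivRight ?_
    intro x
    have hx : p • x = (p • x.1, p • x.2) := rfl
    rw [hx, Prod.ext_iff]
    simp
  have ec : {x : M' × M' // p • x.1 = 0 ∧ p • x.2 = 0} ≃
      {x : M' // p • x = 0} × {x : M' // p • x = 0} :=
    Equiv.subtypeProdEquivProd (p := fun a : M' => p • a = 0) (q := fun a : M' => p • a = 0)
  have e' := (ea.trans eb).trans ec
  exact ⟨Nat.card {x : M' // p • x = 0}, by rw [Nat.card_congr e', Nat.card_prod]⟩
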